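/- Let Λ be a numerical semigroup with conductor c = λ_k, let λ_s (s ≥ k) be an order-0 seed of Λ, and set Λ̃ = Λ \ {λ_s}. Fix 0 ≤ i < k and t > s, and suppose λ_t is an order-i seed of Λ̃ but not an order-i seed of Λ. Then λ_t = λ_s + λ_j − λ_i for some j ≥ i + 1 with λ_{i+1} ≤ λ_j ≤ λ̃_{i+1}, where λ̃_{i+1} denotes the (i+1)-th smallest nonzero element of Λ̃. -/

import Mathlib

/-- A numerical semigroup: a subset of ℕ containing 0, closed under addition,
with finite complement. -/
def IsNumericalSemigroup (S : Set ℕ) : Prop :=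
  0 ∈ S ∧ (∀ a ∈ S, ∀ b ∈ S, a + b ∈ S) ∧ Sᶜ.Finite

/-- `nsElt S i` = λ_i, the i-th smallest element of `S` (λ_0 = 0 when 0 ∈ S). -/
noncomputable def nsElt (S : Set ℕ) (i : ℕ) : ℕ := Nat.nth (· ∈ S) i

/-- The conductor: the smallest `c` such that every `n ≥ c` lies in `S`. -/
noncomputable def nsConductor (S : Set ℕ) : ℕ := sInf {c | ∀ n, c ≤ n → n ∈ S}

/-- The genus: the number of gaps. -/
noncomputable def nsGenus (S : Set ℕ) : ℕ := Sᶜ.ncard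

/-- A generator: a nonzero element of `S` which is not a sum of two nonzero
elements of `S`. -/
def IsGenerator (S : Set ℕ) (σ : ℕ) : Prop :=
  σ ∈ S ∧ σ ≠ 0 ∧ ¬ ∃ a ∈ S, ∃ b ∈ S, a ≠ 0 ∧ b ≠ 0 ∧ a + b = σ

/-- `nsDel S i` = Λ_i = Λ \ {λ_1, …, λ_i}. -/
def nsDel (S : Set ℕ) (i : ℕ) : Set ℕ := S \ (nsElt S '' Set.Icc 1 i)

theorem stmt11 (S : Set ℕ) (hS : IsNumericalSemigroup S) (k s : ℕ)
    (hk : nsElt S k = nsConductor S) (hs : k ≤ s)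
    (hgen : IsGenerator S (nsElt S s))
    (i t : ℕ) (hi : i < k) (ht : s < t)
    (h1 : IsGenerator (nsDel S i \ {nsElt S s}) (nsElt S t + nsElt S i))
    (h2 : ¬ IsGenerator (nsDel S i) (nsElt S t + nsElt S i)) :
    ∃ j, i + 1 ≤ j ∧ nsElt S t + nsElt S i = nsElt S s + nsElt S j ∧
      nsElt S (i + 1) ≤ nsElt S j ∧ nsElt S j ≤ nsElt (S \ {nsElt S s}) (i + 1) := by
  classical
  obtain ⟨h0, hadd, hfin⟩ := hS
  have hSinf : S.Infinite := by
    have := hfin.infinite_compl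
    simpa using this
  have hinf : (setOf (· ∈ S)).Infinite := hSinf
  have hmono : Monotone (Nat.nth (· ∈ S)) := Nat.nth_monotone hinf
  have hsmono : StrictMono (Nat.nth (· ∈ S)) := Nat.nth_strictMono hinf
  have hzero : nsElt S 0 = 0 := Nat.nth_zero_of_zero h0
  -- conductor property
  have hcond : ∀ n, nsConductor S ≤ n → n ∈ S := by
    have hne : {c | ∀ n, c ≤ n → n ∈ S}.Nonempty := by
      obtain ⟨N, hN⟩ := hfin.bddAbove
      refine ⟨N + 1, fun n hn => ?_⟩
      by_contra hns
      exact absurd (hN hns) (by omega)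
    exact Nat.sInf_mem hne
  -- any element above λ_s is in S and in nsDel S i \ {λ_s}
  have hks : nsElt S k ≤ nsElt S s := hmono hs
  have hik : nsElt S i < nsElt S k := hsmono hi
  have hbig : ∀ y : ℕ, nsElt S s < y → y ∈ nsDel S i \ {nsElt S s} := by
    intro y hy
    have hyS : y ∈ S := hcond y (by omega)
    refine ⟨⟨hyS, ?_⟩, by simp; omega⟩
    rintro ⟨r, hr, hry⟩
    have : nsElt S r ≤ nsElt S i := hmono hr.2
    omega
  -- the removed set is infinite too
  have hQinf : (setOf (· ∈ (S \ {nsElt S s}))).Infinite := by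
    have : (S \ {nsElt S s}).Infinite := hSinf.diff (Set.finite_singleton _)
    exact this
  -- λ̃_{i+1} := nth element of S \ {λ_s}
  set x := nsElt (S \ {nsElt S s}) (i + 1) with hxdef
  have hxmem : x ∈ S \ {nsElt S s} := Nat.nth_mem_of_infinite hQinf (i + 1)
  have hxgei : nsElt S (i + 1) ≤ x := by
    have h1' : Nat.nth (· ∈ S) (Nat.count (· ∈ S) x) = x := Nat.nth_count hxmem.1
    have h2' : Nat.count (· ∈ (S \ {nsElt S s})) x ≤ Nat.count (· ∈ S) x :=
      Nat.count_mono_left (fun u _ hu => hu.1)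
    have h3' : Nat.count (· ∈ (S \ {nsElt S s})) x = i + 1 :=
      Nat.count_nth_of_infinite hQinf (i + 1)
    calc nsElt S (i + 1) ≤ Nat.nth (· ∈ S) (Nat.count (· ∈ S) x) := hmono (by omega)
      _ = x := h1'
  have hxii : nsElt S i < nsElt S (i + 1) := hsmono (by omega)
  have hxne0 : x ≠ 0 := by
    have : nsElt S 0 < nsElt S (i+1) := hsmono (by omega)
    omega
  have hxdel : x ∈ nsDel S i \ {nsElt S s} := by
    refine ⟨⟨hxmem.1, ?_⟩, hxmem.2⟩
    rintro ⟨r, hr, hry⟩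
    have : nsElt S r ≤ nsElt S i := hmono hr.2
    omega
  -- extract decomposition from h2
  obtain ⟨hmem1, hne1, hnosum1⟩ := h1
  have hmemdel : nsElt S t + nsElt S i ∈ nsDel S i := hmem1.1
  rw [IsGenerator] at h2
  push_neg at h2
  obtain ⟨a, ha, b, hb, ha0, hb0, hab⟩ := h2 hmemdel hne1
  -- one of a, b must be λ_s
  have hone : a = nsElt S s ∨ b = nsElt S s := by
    by_contra hcon
    push_neg at hcon
    exact hnosum1 ⟨a, ⟨ha, hcon.1⟩, b, ⟨hb, hcon.2⟩, ha0, hb0, hab⟩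
  -- let m be the other summand (in nsDel S i, nonzero), with λ_t + λ_i = λ_s + m
  obtain ⟨m, hmdel, hm0, hmeq⟩ :
      ∃ m, m ∈ nsDel S i ∧ m ≠ 0 ∧ nsElt S t + nsElt S i = nsElt S s + m := by
    rcases hone with h | h
    · exact ⟨b, hb, hb0, by omega⟩
    · exact ⟨a, ha, ha0, by omega⟩
  -- m ≤ x, else decompose λ_s + m = x + (λ_s + m - x) within the deleted semigroup
  have hmlex : m ≤ x := by
    by_contra hgt
    push_neg at hgt
    refine hnosum1 ⟨x, hxdel, nsElt S s + m - x, hbig _ (by omega), hxne0, by omega, by omega⟩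
  -- m = λ_j for j = count
  set j := Nat.count (· ∈ S) m with hjdef
  have hjm : nsElt S j = m := Nat.nth_count hmdel.1
  have hj1 : i + 1 ≤ j := by
    by_contra hjle
    push_neg at hjle
    rcases Nat.eq_zero_or_pos j with h0j | h0j
    · rw [h0j] at hjm; rw [hzero] at hjm; exact hm0 hjm.symm
    · exact hmdel.2 ⟨j, ⟨h0j, by omega⟩, hjm⟩
  exact ⟨j, hj1, by omega, hmono hj1, by rw [hjm]; exact hmlex⟩
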